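/- Last-iterate bound for iBPG: under the standing assumptions, for the iBPG iterates, any k ≥ 0 and any x ∈ dom P ∩ dom φ, F(x̃^{k+1}) − F(x) ≤ (1/(k+1))·( L·D_φ(x, x^0) + Σ_{i=0}^{k} ( η_i·‖x̃^{i+1}‖ + η_i·‖x‖ + L·μ_i + ν_i + i·ξ_i ) ), where ξ_i := η_i·‖x̃^{i+1} − x̃^i‖ + L·(μ_i + μ_{i−1}) + ν_i. -/

import Mathlib

open Filter Topology RealInnerProductSpace

/-- The Bregman distance associated with the kernel `φ` whose gradient map is `gφ`. -/
noncomputable def breg {E : Type*} [NormedAddCommGroup E] [InnerProductSpace ℝ E]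
    (φ : E → ℝ) (gφ : E → E) (x y : E) : ℝ :=
  φ x - φ y - ⟪gφ y, x - y⟫

/-- The ν-subdifferential of `P` (a proper function with effective domain `domP`) at `x`. -/
def nuSubdiff {E : Type*} [NormedAddCommGroup E] [InnerProductSpace ℝ E]
    (P : E → ℝ) (domP : Set E) (ν : ℝ) (x : E) : Set E :=
  {d : E | ∀ u ∈ domP, P x + ⟪d, u - x⟫ - ν ≤ P u}

open Classical in
/-- Extension of a real-valued function with effective domain `dom` to an `EReal`-valued
function taking the value `⊤` outside `dom`. -/
noncomputable def extFun {E : Type*} (g : E → ℝ) (dom : Set E) : E → EReal :=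
  fun x => if x ∈ dom then (g x : EReal) else ⊤

/-- `φ` (with effective domain `domφ` and gradient map `gφ`) is essentially smooth. -/
def EssentiallySmooth {E : Type*} [NormedAddCommGroup E] [InnerProductSpace ℝ E]
    [FiniteDimensional ℝ E] (φ : E → ℝ) (domφ : Set E) (gφ : E → E) : Prop :=
  (interior domφ).Nonempty ∧
  (∀ x ∈ interior domφ, HasGradientAt φ (gφ x) x) ∧
  ∀ (u : ℕ → E) (u₀ : E), (∀ n, u n ∈ interior domφ) →
    Tendsto u atTop (𝓝 u₀) → u₀ ∈ frontier (interior domφ) →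
    Tendsto (fun n => ‖gφ (u n)‖) atTop atTop

/-- The standing assumptions (Assumption A) for the problem `inf {P x + f x : x ∈ Q}`. -/
structure Standing {E : Type*} [NormedAddCommGroup E] [InnerProductSpace ℝ E]
    [FiniteDimensional ℝ E] (Q domφ domP domf X : Set E)
    (φ P f : E → ℝ) (gφ gf : E → E) (L : ℝ) : Prop where
  hQclosed : IsClosed Q
  hQconv : Convex ℝ Q
  hQint : (interior Q).Nonempty
  hφconv : ConvexOn ℝ domφ φ
  hφstrict : StrictConvexOn ℝ (interior domφ) φ
  hφsmooth : EssentiallySmooth φ domφ gφ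
  hφQ : closure domφ = Q
  hPne : domP.Nonempty
  hPconv : ConvexOn ℝ domP P
  hPclosed : LowerSemicontinuous (extFun P domP)
  hPQ : (domP ∩ interior Q).Nonempty
  hfconv : ConvexOn ℝ domf f
  hfclosed : LowerSemicontinuous (extFun f domf)
  hfdom : domφ ⊆ domf
  hfgrad : ∀ x ∈ interior domφ, HasGradientAt f (gf x) x
  hXclosed : IsClosed X
  hXconv : Convex ℝ X
  hXsup : domP ∩ domφ ⊆ X
  hLnn : 0 ≤ L
  hrel : ∀ u ∈ interior domφ ∩ X, ∀ v ∈ domφ ∩ X,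
    f v ≤ f u + ⟪gf u, v - u⟫ + L * breg φ gφ v u

/-- The iBPG iterates with inexactness tolerance sequences `η`, `μ`, `ν`. -/
structure IBPGIter {E : Type*} [NormedAddCommGroup E] [InnerProductSpace ℝ E]
    [FiniteDimensional ℝ E] (domφ domP X : Set E) (φ P : E → ℝ) (gφ gf : E → E) (L : ℝ)
    (η μ ν : ℕ → ℝ) (x xt : ℕ → E) : Prop where
  hη : ∀ k, 0 ≤ η k
  hμ : ∀ k, 0 ≤ μ k
  hν : ∀ k, 0 ≤ ν k
  hx : ∀ k, x k ∈ X ∩ interior domφ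
  hxt : ∀ k, xt k ∈ domP ∩ domφ
  hinex : ∀ k, ∃ d ∈ nuSubdiff P domP (ν k) (xt (k+1)),
    ‖d + gf (x k) + L • (gφ (x (k+1)) - gφ (x k))‖ ≤ η k
  hdist : ∀ k, breg φ gφ (xt (k+1)) (x (k+1)) ≤ μ k

section Helpers

open Set in
lemma convex_gradient_ineq {E : Type*} [NormedAddCommGroup E] [InnerProductSpace ℝ E]
    [CompleteSpace E]
    {s : Set E} {g : E → ℝ} (hg : ConvexOn ℝ s g) {x y : E} (hx : x ∈ s) (hy : y ∈ s)
    {d : E} (hd : HasGradientAt g d x) : g x + ⟪d, y - x⟫ ≤ g y := by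
  have hline : HasDerivAt (fun t : ℝ => x + t • (y - x)) (y - x) 0 := by
    simpa using ((hasDerivAt_id (0:ℝ)).smul_const (y - x)).const_add x
  have hψ : HasDerivAt (fun t : ℝ => g (x + t • (y - x))) ⟪d, y - x⟫ 0 := by
    have hd' : HasFDerivAt g ((InnerProductSpace.toDual ℝ E) d) (x + (0:ℝ) • (y - x)) := by
      simpa using hd.hasFDerivAt
    have := hd'.comp_hasDerivAt 0 hline
    simp only [InnerProductSpace.toDual_apply_apply] at this
    exact this
  have hslope : Filter.Tendsto (slope (fun t : ℝ => g (x + t • (y - x))) 0) (𝓝[>] 0)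
      (𝓝 ⟪d, y - x⟫) :=
    (hasDerivAt_iff_tendsto_slope.mp hψ).mono_left
      (nhdsWithin_mono _ (fun t ht => ne_of_gt ht))
  have hbound : ∀ᶠ t in 𝓝[>] (0:ℝ),
      slope (fun t : ℝ => g (x + t • (y - x))) 0 t ≤ g y - g x := by
    filter_upwards [Ioc_mem_nhdsGT_of_mem (by simp : (0:ℝ) ∈ Ico (0:ℝ) 1)] with t ht
    have ht0 : 0 < t := ht.1
    have ht1 : t ≤ 1 := ht.2
    have hmem : x + t • (y - x) = (1 - t) • x + t • y := by module
    have h0 : x + (0:ℝ) • (y - x) = x := by simp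
    have hcv : g ((1-t) • x + t • y) ≤ (1-t) * g x + t * g y :=
      hg.2 hx hy (by linarith : (0:ℝ) ≤ 1 - t) ht0.le (by ring)
    rw [slope_def_field, h0, sub_zero, div_le_iff₀ ht0, hmem]
    calc g ((1-t) • x + t • y) - g x ≤ ((1-t) * g x + t * g y) - g x := by linarith
      _ = (g y - g x) * t := by ring
  have := le_of_tendsto hslope hbound
  linarith

lemma breg_nonneg' {E : Type*} [NormedAddCommGroup E] [InnerProductSpace ℝ E]
    [CompleteSpace E]
    {s : Set E} {φ : E → ℝ} (hφ : ConvexOn ℝ s φ) {gφ : E → E} {y w : E}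
    (hy : y ∈ s) (hw : w ∈ s) (hgrad : HasGradientAt φ (gφ y) y) :
    0 ≤ breg φ gφ w y := by
  have := convex_gradient_ineq hφ hy hw hgrad
  simp only [breg]; linarith

end Helpers


/-- **Last-iterate bound for iBPG** (Theorem 3.1(i), second bound). Under the standing
assumptions, for the iBPG iterates, any `k ≥ 0` and any `x ∈ dom P ∩ dom φ`,
`F(x̃^{k+1}) − F(x) ≤
  (1/(k+1)) (L D_φ(x, x^0) + Σ_{i=0}^k (η_i ‖x̃^{i+1}‖ + η_i ‖x‖ + L μ_i + ν_i + i ξ_i))`,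
where `ξ_i := η_i ‖x̃^{i+1} − x̃^i‖ + L(μ_i + μ_{i−1}) + ν_i`, with the convention
`μ_{−1} := D_φ(x̃^0, x^0)`, and `F = P + f`. -/
theorem iBPG_last_iterate_bound
    {E : Type*} [NormedAddCommGroup E] [InnerProductSpace ℝ E] [FiniteDimensional ℝ E]
    (Q domφ domP domf X : Set E) (φ P f : E → ℝ) (gφ gf : E → E) (L : ℝ)
    (hstand : Standing Q domφ domP domf X φ P f gφ gf L)
    (η μ ν : ℕ → ℝ) (x xt : ℕ → E)
    (hiter : IBPGIter domφ domP X φ P gφ gf L η μ ν x xt) :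
    ∀ (k : ℕ), ∀ xx ∈ domP ∩ domφ,
      (P (xt (k+1)) + f (xt (k+1))) - (P xx + f xx) ≤
        ((k : ℝ) + 1)⁻¹ * (L * breg φ gφ xx (x 0)
          + ∑ i ∈ Finset.range (k+1),
              (η i * ‖xt (i+1)‖ + η i * ‖xx‖ + L * μ i + ν i
                + (i : ℝ) * (η i * ‖xt (i+1) - xt i‖
                    + L * (μ i + (if i = 0 then breg φ gφ (xt 0) (x 0) else μ (i-1)))
                    + ν i))) := by
  intro k xx hxx
  obtain ⟨hxxP, hxxφ⟩ := hxx
  have hxtmem : ∀ i, xt i ∈ domP ∩ domφ := hiter.hxt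
  have hxmem : ∀ i, x i ∈ X ∩ interior domφ := hiter.hx
  have hintφ : ∀ i, x i ∈ interior domφ := fun i => (hxmem i).2
  have hXxt : ∀ i, xt i ∈ X := fun i => hstand.hXsup ⟨(hxtmem i).1, (hxtmem i).2⟩
  have φgrad := hstand.hφsmooth.2.1
  -- nonnegativity of Bregman distances to iterates
  have hnn : ∀ w ∈ domφ, ∀ j, 0 ≤ breg φ gφ w (x j) := fun w hw j =>
    breg_nonneg' hstand.hφconv (interior_subset (hintφ j)) hw (φgrad (x j) (hintφ j))
  -- key per-step inequality
  have key : ∀ i : ℕ, ∀ u ∈ domP, u ∈ domφ →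
      (P (xt (i+1)) + f (xt (i+1))) - (P u + f u) ≤
        η i * ‖xt (i+1) - u‖ + L * breg φ gφ u (x i) - L * breg φ gφ u (x (i+1))
          + L * μ i + ν i := by
    intro i u huP huφ
    obtain ⟨d, hd, hΔ⟩ := hiter.hinex i
    have hP := hd u huP
    have hf1 := hstand.hrel (x i) ⟨(hxmem i).2, (hxmem i).1⟩ (xt (i+1))
      ⟨(hxtmem (i+1)).2, hXxt (i+1)⟩
    have hf2 : f (x i) + ⟪gf (x i), u - x i⟫ ≤ f u :=
      convex_gradient_ineq hstand.hfconv
        (hstand.hfdom (interior_subset (hintφ i))) (hstand.hfdom huφ)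
        (hstand.hfgrad (x i) (hintφ i))
    have hΔle : ⟪d + gf (x i) + L • (gφ (x (i+1)) - gφ (x i)), xt (i+1) - u⟫ ≤
        η i * ‖xt (i+1) - u‖ :=
      le_trans (real_inner_le_norm _ _) (mul_le_mul_of_nonneg_right hΔ (norm_nonneg _))
    have hexp : ⟪d + gf (x i) + L • (gφ (x (i+1)) - gφ (x i)), xt (i+1) - u⟫ =
        ⟪d, xt (i+1) - u⟫ + ⟪gf (x i), xt (i+1) - u⟫
          + L * ⟪gφ (x (i+1)) - gφ (x i), xt (i+1) - u⟫ := by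
      simp [inner_add_left, real_inner_smul_left]
    have h1 : ⟪d, u - xt (i+1)⟫ = -⟪d, xt (i+1) - u⟫ := by
      simp only [inner_sub_right]; ring
    have h2 : ⟪gf (x i), xt (i+1) - u⟫ =
        ⟪gf (x i), xt (i+1) - x i⟫ - ⟪gf (x i), u - x i⟫ := by
      simp only [inner_sub_right]; ring
    have htp : L * ⟪gφ (x (i+1)) - gφ (x i), xt (i+1) - u⟫ =
        -(L * breg φ gφ u (x i)) + L * breg φ gφ u (x (i+1))
          - L * breg φ gφ (xt (i+1)) (x (i+1)) + L * breg φ gφ (xt (i+1)) (x i) := by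
      have : ⟪gφ (x (i+1)) - gφ (x i), xt (i+1) - u⟫ =
          -(breg φ gφ u (x i) - breg φ gφ u (x (i+1))
            + breg φ gφ (xt (i+1)) (x (i+1)) - breg φ gφ (xt (i+1)) (x i)) := by
        simp only [breg, inner_sub_left, inner_sub_right]; ring
      rw [this]; ring
    have hLdist : L * breg φ gφ (xt (i+1)) (x (i+1)) ≤ L * μ i :=
      mul_le_mul_of_nonneg_left (hiter.hdist i) hstand.hLnn
    linarith
  -- ξ sequence
  set ξ : ℕ → ℝ := fun i => η i * ‖xt (i+1) - xt i‖
      + L * (μ i + (if i = 0 then breg φ gφ (xt 0) (x 0) else μ (i-1))) + ν i with hξ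
  -- near-monotonicity
  have hmono : ∀ i : ℕ, (P (xt (i+1)) + f (xt (i+1))) - (P (xt i) + f (xt i)) ≤ ξ i := by
    intro i
    have hk := key i (xt i) (hxtmem i).1 (hxtmem i).2
    have hb : breg φ gφ (xt i) (x i) ≤
        (if i = 0 then breg φ gφ (xt 0) (x 0) else μ (i-1)) := by
      cases i with
      | zero => simp
      | succ j => simpa using hiter.hdist j
    have hb' : L * breg φ gφ (xt i) (x i) ≤
        L * (if i = 0 then breg φ gφ (xt 0) (x 0) else μ (i-1)) :=
      mul_le_mul_of_nonneg_left hb hstand.hLnn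
    have hb2 : 0 ≤ L * breg φ gφ (xt i) (x (i+1)) :=
      mul_nonneg hstand.hLnn (hnn _ (hxtmem i).2 (i+1))
    simp only [hξ]
    linarith
  -- chain bound
  have chain : ∀ n m : ℕ, n ≤ m →
      (P (xt (m+1)) + f (xt (m+1))) - (P (xt (n+1)) + f (xt (n+1))) ≤
        ∑ j ∈ Finset.Ico (n+1) (m+1), ξ j := by
    intro n m hnm
    induction m, hnm using Nat.le_induction with
    | base => simp
    | succ m hm ih =>
      rw [Finset.sum_Ico_succ_top (by omega : n+1 ≤ m+1)]
      have := hmono (m+1)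
      linarith
  -- double sum identity
  have hdouble : ∀ n : ℕ, ∑ i ∈ Finset.range n, (∑ j ∈ Finset.Ico (i+1) n, ξ j) =
      ∑ j ∈ Finset.range n, (j : ℝ) * ξ j := by
    intro n
    induction n with
    | zero => simp
    | succ n ih =>
      rw [Finset.sum_range_succ, Finset.sum_range_succ]
      have h1 : ∀ i ∈ Finset.range n, (∑ j ∈ Finset.Ico (i+1) (n+1), ξ j) =
          (∑ j ∈ Finset.Ico (i+1) n, ξ j) + ξ n := by
        intro i hi
        exact Finset.sum_Ico_succ_top (Nat.succ_le_of_lt (Finset.mem_range.mp hi)) _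
      rw [Finset.sum_congr rfl h1, Finset.sum_add_distrib, ih]
      simp [Finset.sum_const, Finset.card_range, nsmul_eq_mul]
  -- per-step bound against xx
  have hkey2 : ∀ i : ℕ, (P (xt (i+1)) + f (xt (i+1))) - (P xx + f xx) ≤
      (η i * ‖xt (i+1)‖ + η i * ‖xx‖ + L * μ i + ν i)
        + (L * breg φ gφ xx (x i) - L * breg φ gφ xx (x (i+1))) := by
    intro i
    have hk := key i xx hxxP hxxφ
    have hnorm : ‖xt (i+1) - xx‖ ≤ ‖xt (i+1)‖ + ‖xx‖ := norm_sub_le _ _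
    have := mul_le_mul_of_nonneg_left hnorm (hiter.hη i)
    linarith
  -- assemble
  have hkpos : (0:ℝ) < (k:ℝ) + 1 := by positivity
  have hA : ∑ i ∈ Finset.range (k+1),
      ((P (xt (k+1)) + f (xt (k+1))) - (P (xt (i+1)) + f (xt (i+1)))) ≤
      ∑ i ∈ Finset.range (k+1), (i : ℝ) * ξ i := by
    calc ∑ i ∈ Finset.range (k+1),
        ((P (xt (k+1)) + f (xt (k+1))) - (P (xt (i+1)) + f (xt (i+1))))
        ≤ ∑ i ∈ Finset.range (k+1), ∑ j ∈ Finset.Ico (i+1) (k+1), ξ j :=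
          Finset.sum_le_sum (fun i hi =>
            chain i k (Nat.lt_succ_iff.mp (Finset.mem_range.mp hi)))
      _ = _ := hdouble (k+1)
  have hB : ∑ i ∈ Finset.range (k+1),
      ((P (xt (i+1)) + f (xt (i+1))) - (P xx + f xx)) ≤
      L * breg φ gφ xx (x 0) + ∑ i ∈ Finset.range (k+1),
        (η i * ‖xt (i+1)‖ + η i * ‖xx‖ + L * μ i + ν i) := by
    have h3 : ∑ i ∈ Finset.range (k+1),
        ((P (xt (i+1)) + f (xt (i+1))) - (P xx + f xx)) ≤
        ∑ i ∈ Finset.range (k+1),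
          ((η i * ‖xt (i+1)‖ + η i * ‖xx‖ + L * μ i + ν i)
            + (L * breg φ gφ xx (x i) - L * breg φ gφ xx (x (i+1)))) :=
      Finset.sum_le_sum (fun i _ => hkey2 i)
    rw [Finset.sum_add_distrib,
      Finset.sum_range_sub' (fun i => L * breg φ gφ xx (x i)) (k+1)] at h3
    have h0 : 0 ≤ L * breg φ gφ xx (x (k+1)) :=
      mul_nonneg hstand.hLnn (hnn xx hxxφ (k+1))
    linarith
  have hAB : ∑ i ∈ Finset.range (k+1),
        ((P (xt (k+1)) + f (xt (k+1))) - (P (xt (i+1)) + f (xt (i+1))))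
      + ∑ i ∈ Finset.range (k+1),
        ((P (xt (i+1)) + f (xt (i+1))) - (P xx + f xx))
      = ((k:ℝ)+1) * ((P (xt (k+1)) + f (xt (k+1))) - (P xx + f xx)) := by
    rw [← Finset.sum_add_distrib]
    have h4 : ∀ i ∈ Finset.range (k+1),
        ((P (xt (k+1)) + f (xt (k+1))) - (P (xt (i+1)) + f (xt (i+1))))
          + ((P (xt (i+1)) + f (xt (i+1))) - (P xx + f xx))
        = (P (xt (k+1)) + f (xt (k+1))) - (P xx + f xx) := by
      intro i _; ring
    rw [Finset.sum_congr rfl h4, Finset.sum_const, Finset.card_range, nsmul_eq_mul]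
    push_cast; ring
  rw [le_inv_mul_iff₀ hkpos]
  have hsum : ∑ i ∈ Finset.range (k+1),
      (η i * ‖xt (i+1)‖ + η i * ‖xx‖ + L * μ i + ν i + (i : ℝ) * ξ i)
      = (∑ i ∈ Finset.range (k+1), (η i * ‖xt (i+1)‖ + η i * ‖xx‖ + L * μ i + ν i))
        + ∑ i ∈ Finset.range (k+1), (i : ℝ) * ξ i := Finset.sum_add_distrib
  calc ((k:ℝ)+1) * ((P (xt (k+1)) + f (xt (k+1))) - (P xx + f xx))
      ≤ L * breg φ gφ xx (x 0) + (∑ i ∈ Finset.range (k+1),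
          (η i * ‖xt (i+1)‖ + η i * ‖xx‖ + L * μ i + ν i))
        + ∑ i ∈ Finset.range (k+1), (i : ℝ) * ξ i := by
        rw [← hAB]; linarith
    _ = L * breg φ gφ xx (x 0) + ∑ i ∈ Finset.range (k+1),
          (η i * ‖xt (i+1)‖ + η i * ‖xx‖ + L * μ i + ν i
            + (i : ℝ) * (η i * ‖xt (i+1) - xt i‖
                + L * (μ i + (if i = 0 then breg φ gφ (xt 0) (x 0) else μ (i-1)))
                + ν i)) := by
        rw [hsum]; ring
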